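/- Let K be a field of characteristic zero, let f₁,…,f_N ∈ R = K[x₁,…,xₙ], and let d₁,…,d_N be positive integers. For m ≥ 1 let B_m ⊆ R be the ideal generated by all products ∏_{j=1}^{s} ∂^{α_j} f_{i_j} (s ≥ 1), where each α_j is a multi-index of partial differentiation with |α_j| < d_{i_j} and ∑_{j=1}^{s} (d_{i_j} − |α_j|) ≥ m; set B₀ = R. Then B_i·B_j ⊆ B_{i+j} for all i, j ≥ 0, and the graded family (B_m) is differentially closed: for every i ≥ 0, every g ∈ B_{i+1}, and every variable xₗ, one has ∂g/∂xₗ ∈ B_i. (Hence the differential closure of the Rees algebra generated by the f_i in degrees d_i is generated by all partial derivatives of order j < d_i of the f_i, placed in degree d_i − j.) -/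

import Mathlib

/-- Iterated partial derivative `∂^α f` along a list of variables `L`
(the multi-index `α` is the multiset of entries of `L`, of order `L.length`). -/
noncomputable def iterPDeriv {K : Type*} [Field K] {n : ℕ} (L : List (Fin n))
    (f : MvPolynomial (Fin n) K) : MvPolynomial (Fin n) K :=
  L.foldr (fun i g => MvPolynomial.pderiv i g) f

/-- The family `(B_m)`: `B₀ = R`, and for `m ≥ 1`, `B_m` is the ideal generated by all
products `∏_{j=1}^{s} ∂^{α_j} f_{i_j}` (`s ≥ 1`) with each `|α_j| < d_{i_j}` and
`∑_j (d_{i_j} − |α_j|) ≥ m`. -/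
noncomputable def closureFamily {K : Type*} [Field K] {n N : ℕ}
    (f : Fin N → MvPolynomial (Fin n) K) (d : Fin N → ℕ) (m : ℕ) :
    Ideal (MvPolynomial (Fin n) K) :=
  if m = 0 then ⊤
  else Ideal.span {g | ∃ (s : ℕ), 1 ≤ s ∧ ∃ (idx : Fin s → Fin N) (L : Fin s → List (Fin n)),
    (∀ j, (L j).length < d (idx j)) ∧
    m ≤ ∑ j, (d (idx j) - (L j).length) ∧
    g = ∏ j, iterPDeriv (L j) (f (idx j))}

/-- Leibniz rule for a `pderiv` of a finite product. -/
lemma pderiv_finset_prod {K : Type*} [Field K] {n : ℕ} (l : Fin n) {ι : Type*} [DecidableEq ι]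
    (t : Finset ι) (F : ι → MvPolynomial (Fin n) K) :
    MvPolynomial.pderiv l (∏ k ∈ t, F k) =
      ∑ j ∈ t, (∏ k ∈ t.erase j, F k) * MvPolynomial.pderiv l (F j) := by
  induction t using Finset.induction_on with
  | empty => simp
  | insert _ _ ha ih =>
    rename_i a s
    rw [Finset.prod_insert ha, MvPolynomial.pderiv_mul, ih, Finset.sum_insert ha,
      Finset.erase_insert ha]
    have hterm : ∀ j ∈ s, (∏ k ∈ (insert a s).erase j, F k) * MvPolynomial.pderiv l (F j)
        = F a * ((∏ k ∈ s.erase j, F k) * MvPolynomial.pderiv l (F j)) := by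
      intro j hj
      rw [Finset.erase_insert_of_ne (by rintro rfl; exact ha hj),
        Finset.prod_insert (fun h => ha (Finset.mem_of_mem_erase h))]
      ring
    rw [Finset.sum_congr rfl hterm, ← Finset.mul_sum]
    ring

/-- A product over `univ.erase j` is a product over `Fin t` via `succAbove`. -/
lemma prod_erase_succAbove {M : Type*} [CommMonoid M] {t : ℕ} (j : Fin (t + 1))
    (F : Fin (t + 1) → M) :
    ∏ k ∈ Finset.univ.erase j, F k = ∏ k : Fin t, F (j.succAbove k) := by
  have h : (Finset.univ.erase j : Finset (Fin (t + 1)))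
      = Finset.univ.map j.succAboveEmb := by
    rw [Fin.univ_succAbove t j, Finset.erase_cons]
  rw [h, Finset.prod_map]
  rfl

/-- Over a field of characteristic zero, the family `(B_m)` built
from `f₁,…,f_N` and positive degrees `d₁,…,d_N` is a graded family of ideals
(`B_i·B_j ⊆ B_{i+j}`) which is differentially closed: every first order partial
derivative of an element of `B_{i+1}` lies in `B_i`.  (Hence the differential closure
of the Rees algebra generated by the `fᵢ` in degrees `dᵢ` is generated by all partial
derivatives of order `j < dᵢ` of the `fᵢ`, placed in degree `dᵢ − j`.) -/
theorem stmt_11 {K : Type*} [Field K] [CharZero K] {n N : ℕ}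
    (f : Fin N → MvPolynomial (Fin n) K) (d : Fin N → ℕ) (hd : ∀ i, 0 < d i) :
    (∀ i j : ℕ, closureFamily f d i * closureFamily f d j ≤ closureFamily f d (i + j)) ∧
    (∀ i : ℕ, ∀ g ∈ closureFamily f d (i + 1), ∀ l : Fin n,
      MvPolynomial.pderiv l g ∈ closureFamily f d i) := by
  classical
  -- the generating set of `B_m` for `m ≥ 1`
  set S : ℕ → Set (MvPolynomial (Fin n) K) := fun m =>
    {g | ∃ (s : ℕ), 1 ≤ s ∧ ∃ (idx : Fin s → Fin N) (L : Fin s → List (Fin n)),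
      (∀ j, (L j).length < d (idx j)) ∧
      m ≤ ∑ j, (d (idx j) - (L j).length) ∧
      g = ∏ j, iterPDeriv (L j) (f (idx j))} with hS
  have hcf : ∀ m, 1 ≤ m → closureFamily f d m = Ideal.span (S m) := by
    intro m hm
    simp only [closureFamily, hS]
    rw [if_neg (by omega)]
  -- antitonicity of the generating sets
  have hSmono : ∀ {m m'}, m' ≤ m → S m ⊆ S m' := by
    intro m m' h g hg
    obtain ⟨s, hs, idx, L, h1, h2, h3⟩ := hg
    exact ⟨s, hs, idx, L, h1, le_trans h h2, h3⟩
  have hanti : ∀ {m m'}, m' ≤ m → closureFamily f d m ≤ closureFamily f d m' := by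
    intro m m' h
    rcases Nat.eq_zero_or_pos m' with rfl | hm'
    · simp [closureFamily]
    rw [hcf m (le_trans hm' h), hcf m' hm']
    exact Ideal.span_mono (hSmono h)
  constructor
  · -- multiplicativity
    intro i j
    rcases Nat.eq_zero_or_pos i with rfl | hi
    · simpa [closureFamily] using le_of_eq (by rw [Ideal.top_mul]; norm_num)
    rcases Nat.eq_zero_or_pos j with rfl | hj
    · simpa [closureFamily] using le_of_eq (by rw [Ideal.mul_top])
    rw [hcf i hi, hcf j hj, hcf (i + j) (by omega), Ideal.span_mul_span']
    apply Ideal.span_mono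
    rintro g ⟨a, ⟨s, hs, idxa, La, h1a, h2a, rfl⟩, b, ⟨t, ht, idxb, Lb, h1b, h2b, rfl⟩, rfl⟩
    refine ⟨s + t, by omega, Fin.addCases idxa idxb, Fin.addCases La Lb, ?_, ?_, ?_⟩
    · intro k
      refine Fin.addCases (fun k' => ?_) (fun k' => ?_) k <;>
        simp [Fin.addCases_left, Fin.addCases_right, h1a, h1b]
    · rw [Fin.sum_univ_add]
      simp only [Fin.addCases_left, Fin.addCases_right]
      omega
    · rw [Fin.prod_univ_add]
      simp only [Fin.addCases_left, Fin.addCases_right]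
  · -- differential closedness
    intro i g hg l
    rcases Nat.eq_zero_or_pos i with rfl | hi
    · simp [closureFamily]
    rw [hcf (i + 1) (by omega)] at hg
    rw [hcf i hi]
    induction hg using Submodule.span_induction with
    | zero => simp
    | add x y hx hy hx' hy' => rw [map_add]; exact Ideal.add_mem _ hx' hy'
    | smul a x hx hx' =>
      have hxmem : x ∈ Ideal.span (S i) :=
        Ideal.span_mono (hSmono (Nat.le_succ i)) hx
      rw [smul_eq_mul, MvPolynomial.pderiv_mul]
      exact Ideal.add_mem _ (Ideal.mul_mem_left _ _ hxmem)
        (Ideal.mul_mem_left _ _ hx')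
    | mem x hx =>
      obtain ⟨s, hs, idx, L, h1, h2, rfl⟩ := hx
      rw [pderiv_finset_prod]
      apply Ideal.sum_mem
      intro j _
      -- `pderiv l (iterPDeriv (L j) (f (idx j))) = iterPDeriv (l :: L j) (f (idx j))`
      have hder : MvPolynomial.pderiv l (iterPDeriv (L j) (f (idx j)))
          = iterPDeriv (l :: L j) (f (idx j)) := rfl
      by_cases hcase : (L j).length + 1 < d (idx j)
      · -- the differentiated factor is still a valid factor
        apply Ideal.subset_span
        refine ⟨s, hs, idx, Function.update L j (l :: L j), ?_, ?_, ?_⟩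
        · intro k
          rcases eq_or_ne k j with rfl | hk
          · simpa using hcase
          · simp [Function.update_of_ne hk, h1 k]
        · have hsplit : ∀ (G : Fin s → ℕ), ∑ k, G k
              = G j + ∑ k ∈ Finset.univ.erase j, G k := by
            intro G
            rw [Finset.add_sum_erase _ _ (Finset.mem_univ j)]
          rw [hsplit]
          have := hsplit (fun k => d (idx k) - (L k).length)
          rw [this] at h2
          have heq : ∑ k ∈ Finset.univ.erase j,
              (d (idx k) - ((Function.update L j (l :: L j)) k).length)
              = ∑ k ∈ Finset.univ.erase j, (d (idx k) - (L k).length) := by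
            apply Finset.sum_congr rfl
            intro k hk
            rw [Function.update_of_ne (Finset.ne_of_mem_erase hk)]
          rw [heq, Function.update_self]
          simp only [List.length_cons]
          omega
        · rw [← Finset.mul_prod_erase _ _ (Finset.mem_univ j),
            Function.update_self, hder, mul_comm]
          congr 1
          apply Finset.prod_congr rfl
          intro k hk
          rw [Function.update_of_ne (Finset.ne_of_mem_erase hk)]
      · -- the factor is used up; the remaining product is a generator of `B_i`
        have hdj : d (idx j) - (L j).length = 1 := by have := h1 j; omega
        -- `s ≥ 2`, since the total weight is at least `i + 1 ≥ 2`
        obtain ⟨t, rfl⟩ : ∃ t, s = t + 1 := ⟨s - 1, by omega⟩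
        have hsplit : ∑ k, (d (idx k) - (L k).length)
            = (d (idx j) - (L j).length)
              + ∑ k : Fin t, (d (idx (j.succAbove k)) - (L (j.succAbove k)).length) := by
          rw [Fin.sum_univ_succAbove _ j]
        have hsum : i ≤ ∑ k : Fin t,
            (d (idx (j.succAbove k)) - (L (j.succAbove k)).length) := by omega
        have ht : 1 ≤ t := by
          by_contra h
          have ht0 : t = 0 := by omega
          subst ht0
          simp at hsum
          omega
        apply Ideal.mul_mem_right
        apply Ideal.subset_span
        refine ⟨t, ht, idx ∘ j.succAbove, L ∘ j.succAbove, fun k => h1 _, hsum, ?_⟩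
        rw [prod_erase_succAbove]
        rfl
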